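/- In the trading graph G constructed by the reduction from 3D-matching, any execution in which every X-cycle uses exactly one edge from E₀ and which contains k large X-cycles performs at most 8n − k exchanges, with equality if and only if it executes exactly n − k Y-cycles. -/

import Mathlib

structure TState (N M : Type) where
  own : N → Finset M
  dem : N → Finset M

variable {N M : Type} [DecidableEq N] [DecidableEq M]

/-- In a trading cycle `c = [(i₁,j₁),…,(i_k,j_k)]`, agent `i_t` receives item `j_t`;
`gives c` pairs each agent with the item he gives, namely `j_{t-1}` (cyclically). -/
def gives (c : List (N × M)) : List (N × M) :=
  (c.map Prod.fst).zip ((c.rotate (c.length - 1)).map Prod.snd)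

/-- A valid cycle step: nonempty, visits each agent and each item at most once,
every participating agent receives an item he currently demands and gives an item
he currently owns. -/
def ValidCycle (s : TState N M) (c : List (N × M)) : Prop :=
  c ≠ [] ∧ (c.map Prod.fst).Nodup ∧ (c.map Prod.snd).Nodup ∧
    (∀ p ∈ c, p.2 ∈ s.dem p.1) ∧ (∀ p ∈ gives c, p.2 ∈ s.own p.1)

/-- The state after executing a cycle: every used demand edge is reversed into a
supply edge (the received item moves into the agent's supply and leaves his demand),
and every used supply edge is removed. -/
def stepCycle (s : TState N M) (c : List (N × M)) : TState N M where
  own i := ((s.own i).filter fun j => (i, j) ∉ gives c) ∪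
      ((c.filter fun p => decide (p.1 = i)).map Prod.snd).toFinset
  dem i := (s.dem i).filter fun j => (i, j) ∉ c

/-- An execution is a sequence of cycle steps, each valid in the successively
updated state. -/
def ValidExec (s : TState N M) : List (List (N × M)) → Prop
  | [] => True
  | c :: r => ValidCycle s c ∧ ValidExec (stepCycle s c) r

/-- Total number of exchanges (items received) in an execution. -/
def exchanges (r : List (List (N × M))) : ℕ := (r.map List.length).sum

/-- Number of items agent `i` receives during execution `r`. -/
def receivedCount (r : List (List (N × M))) (i : N) : ℕ :=
  (r.map fun c => c.countP fun p => decide (p.1 = i)).sum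

/-- Number of items agent `i` gives during execution `r`. -/
def givenCount (r : List (List (N × M))) (i : N) : ℕ :=
  (r.map fun c => (gives c).countP fun p => decide (p.1 = i)).sum

/-- A static execution allocates each item at most once. -/
def StaticExec (r : List (List (N × M))) : Prop := (r.flatten.map Prod.snd).Nodup

/-- Agents of the reduction from 3D-matching: `ga t 0, ga t 1, ga t 2` are the
gadget agents `(xyz)₂, (xyz)₄, (xyz)₆` for the triple `t = (x,y,z)`; `ya y = y₂`,
`za z = z₁`, `xa1 x = x₁`, `xa3 x = x₃`. -/
inductive RAg (n : ℕ) where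
  | ga : (Fin n × Fin n × Fin n) → Fin 3 → RAg n
  | ya : Fin n → RAg n
  | za : Fin n → RAg n
  | xa1 : Fin n → RAg n
  | xa3 : Fin n → RAg n
deriving DecidableEq

/-- Items of the reduction: `gi t 0, gi t 1, gi t 2, gi t 3` are the gadget items
`(xyz)₁, (xyz)₃, (xyz)₅, (xyz)₇`; `yi y = y₁`, `zi z = z₂`, `xi x = x₂`. -/
inductive RIt (n : ℕ) where
  | gi : (Fin n × Fin n × Fin n) → Fin 4 → RIt n
  | yi : Fin n → RIt n
  | zi : Fin n → RIt n
  | xi : Fin n → RIt n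
deriving DecidableEq

/-- Supply sets of the reduction instance built from the triple set `T`. -/
def RS (n : ℕ) (T : Finset (Fin n × Fin n × Fin n)) : RAg n → Finset (RIt n)
  | .ga t i => if t ∈ T then {.gi t i.castSucc} else ∅
  | .ya y => {.yi y}
  | .za z => (T.filter fun t => t.2.2 = z).image fun t => .gi t 3
  | .xa1 _ => Finset.univ.image RIt.zi
  | .xa3 x => {.xi x}

/-- Demand sets of the reduction instance built from the triple set `T`. -/
def RD (n : ℕ) (T : Finset (Fin n × Fin n × Fin n)) : RAg n → Finset (RIt n)
  | .ga t i =>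
      if t ∈ T then
        (if i = 0 then {.gi t 1, .gi t 3}
         else if i = 1 then {.yi t.2.1}
         else {.gi t 3})
      else ∅
  | .ya y => (T.filter fun t => t.2.1 = y).image fun t => .gi t 2
  | .za z => {.zi z}
  | .xa1 x => {.xi x}
  | .xa3 x => (T.filter fun t => t.1 = x).image fun t => .gi t 0

/-- Whether a demand edge (agent receives item) belongs to the class
`E₀ = {(x₁, x₂)}`. -/
def isE0 {n : ℕ} : RAg n × RIt n → Bool
  | (.xa1 x, .xi x') => x == x'
  | _ => false

/-- Whether a demand edge belongs to the class `E₆ = {((xyz)₂, (xyz)₇)}`. -/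
def isE6 {n : ℕ} : RAg n × RIt n → Bool
  | (.ga t i, .gi t' j) => t == t' && i == 0 && j == 3
  | _ => false

/-- The number of large `X`-cycles in an execution: cycle steps using an `E₀` edge
but no `E₆` edge. -/
def numLarge {n : ℕ} (r : List (List (RAg n × RIt n))) : ℕ :=
  r.countP fun c => (c.countP isE0 != 0) && (c.countP isE6 == 0)

/-- The number of `Y`-cycles in an execution: cycle steps using no `E₀` edge. -/
def numY {n : ℕ} (r : List (List (RAg n × RIt n))) : ℕ :=
  r.countP fun c => c.countP isE0 == 0

/-- A set of triples is a partial 3D-matching: pairwise disjoint in each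
coordinate. -/
def IsPartialMatching {n : ℕ} (S : Finset (Fin n × Fin n × Fin n)) : Prop :=
  ∀ t ∈ S, ∀ t' ∈ S, t ≠ t' →
    t.1 ≠ t'.1 ∧ t.2.1 ≠ t'.2.1 ∧ t.2.2 ≠ t'.2.2


set_option linter.unusedSectionVars false
set_option maxHeartbeats 1000000

namespace S13

def ix (L : List (N × M)) (p : N × M) : ℕ :=
  @List.idxOf _ (@instBEqOfDecidableEq (N × M) _) p L

def nxt (L : List (N × M)) (p : N × M) : N × M :=
  L.getD ((ix L p + 1) % L.length) p

variable {L : List (N × M)} {p q : N × M}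

theorem length_pos (h : p ∈ L) : 0 < L.length := List.length_pos_iff.2 (List.ne_nil_of_mem h)

theorem ix_lt (h : p ∈ L) : ix L p < L.length := by
  unfold ix; exact (@List.idxOf_lt_length_iff _ instBEqOfDecidableEq _ _ _).2 h

theorem getElem_ix (h : p ∈ L) : L[ix L p]'(ix_lt h) = p := by
  unfold ix at *; exact @List.getElem_idxOf _ instBEqOfDecidableEq _ _ _ _

theorem ix_getElem (hL : L.Nodup) {i : ℕ} (hi : i < L.length) : ix L (L[i]'hi) = i := by
  unfold ix; exact @List.Nodup.idxOf_getElem _ instBEqOfDecidableEq _ _ hL i hi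

theorem nxt_eq_getElem (h : p ∈ L) (hu : (ix L p + 1) % L.length < L.length) :
    nxt L p = L[(ix L p + 1) % L.length]'hu := by
  rw [nxt, List.getD_eq_getElem]

theorem nxt_mem (h : p ∈ L) : nxt L p ∈ L := by
  rw [nxt_eq_getElem h (Nat.mod_lt _ (length_pos h))]; exact List.getElem_mem _

theorem ix_nxt (hL : L.Nodup) (h : p ∈ L) :
    ix L (nxt L p) = (ix L p + 1) % L.length := by
  rw [nxt_eq_getElem h (Nat.mod_lt _ (length_pos h)), ix_getElem hL]

theorem length_gives : (gives L).length = L.length := by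
  simp [gives]

theorem getElem_gives {u : ℕ} (hu : u < L.length)
    (hv : (u + (L.length - 1)) % L.length < L.length) :
    (gives L)[u]'(by rw [length_gives]; exact hu) =
      ((L[u]'hu).1, (L[(u + (L.length - 1)) % L.length]'hv).2) := by
  simp only [gives]
  rw [List.getElem_zip]
  simp [List.getElem_rotate]

theorem nxt_gives (h : p ∈ L) : ((nxt L p).1, p.2) ∈ gives L := by
  have hm := length_pos h
  have hidx : ix L p < L.length := ix_lt h
  have hu : (ix L p + 1) % L.length < L.length := Nat.mod_lt _ hm
  have hv : ((ix L p + 1) % L.length + (L.length - 1)) % L.length < L.length :=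
    Nat.mod_lt _ hm
  have he : ((ix L p + 1) % L.length + (L.length - 1)) % L.length = ix L p := by
    rw [Nat.mod_add_mod]
    have h1 : ix L p + 1 + (L.length - 1) = ix L p + L.length := by omega
    rw [h1, Nat.add_mod_right, Nat.mod_eq_of_lt hidx]
  have hL2 : L[((ix L p + 1) % L.length + (L.length - 1)) % L.length]'hv
      = L[ix L p]'hidx := by
    congr 1
  have hgg := getElem_gives (L := L) hu hv
  rw [hL2, getElem_ix h, ← nxt_eq_getElem h hu] at hgg
  rw [← hgg]
  exact List.getElem_mem _

theorem nxt_iterate (hL : L.Nodup) (h : p ∈ L) (k : ℕ) :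
    (nxt L)^[k] p ∈ L ∧ ix L ((nxt L)^[k] p) = (ix L p + k) % L.length := by
  induction k with
  | zero => exact ⟨h, by simp [Nat.mod_eq_of_lt (ix_lt h)]⟩
  | succ k ih =>
    obtain ⟨hmem, hid⟩ := ih
    refine ⟨by rw [Function.iterate_succ_apply']; exact nxt_mem hmem, ?_⟩
    rw [Function.iterate_succ_apply', ix_nxt hL hmem, hid, Nat.mod_add_mod, ← Nat.add_assoc]

theorem length_dvd_of_iterate_eq (hL : L.Nodup) (h : p ∈ L) {k : ℕ}
    (hk : (nxt L)^[k] p = p) : L.length ∣ k := by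
  have hid := (nxt_iterate hL h k).2
  rw [hk] at hid
  have h2 : ix L p < L.length := ix_lt h
  have h3 := Nat.div_add_mod (ix L p + k) L.length
  exact ⟨(ix L p + k) / L.length, by omega⟩

theorem perm_of_chain (hL : L.Nodup) {es : List (N × M)} (hp : p ∈ es)
    (hnd : es.Nodup) (hsub : es ⊆ L)
    (hiter : (nxt L)^[es.length] p = p) : L.Perm es := by
  have hdvd := length_dvd_of_iterate_eq hL (hsub hp) hiter
  have hle : es.length ≤ L.length := List.Subperm.length_le (List.subperm_of_subset hnd hsub)
  have hpos : 0 < es.length := List.length_pos_iff.2 (List.ne_nil_of_mem hp)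
  have hge : L.length ≤ es.length := Nat.le_of_dvd hpos hdvd
  exact ((List.subperm_of_subset hnd hsub).perm_of_length_le (by omega)).symm



variable {n : ℕ} {T : Finset (Fin n × Fin n × Fin n)} {s : TState (RAg n) (RIt n)}
  {i : RAg n} {j : RIt n} {t t' : Fin n × Fin n × Fin n} {x y z : Fin n}

def Inv (n : ℕ) (T : Finset (Fin n × Fin n × Fin n)) (s : TState (RAg n) (RIt n)) : Prop :=
  (∀ i, s.dem i ⊆ RD n T i) ∧ (∀ i, s.own i ⊆ RS n T i ∪ (RD n T i \ s.dem i))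

theorem own_cases (hinv : Inv n T s) (h : j ∈ s.own i) :
    j ∈ RS n T i ∨ (j ∈ RD n T i ∧ j ∉ s.dem i) := by
  have := hinv.2 i h
  rcases Finset.mem_union.1 this with h' | h'
  · exact Or.inl h'
  · exact Or.inr (by simpa using Finset.mem_sdiff.1 h')

-- demand characterizations
theorem dem_xa1 (hinv : Inv n T s) (h : j ∈ s.dem (.xa1 x)) : j = .xi x := by
  have := hinv.1 _ h; simpa [RD] using this

theorem dem_za (hinv : Inv n T s) (h : j ∈ s.dem (.za z)) : j = .zi z := by
  have := hinv.1 _ h; simpa [RD] using this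

theorem dem_xa3 (hinv : Inv n T s) (h : j ∈ s.dem (.xa3 x)) :
    ∃ t, t ∈ T ∧ t.1 = x ∧ j = .gi t 0 := by
  have := hinv.1 _ h; simp [RD] at this
  obtain ⟨a, b, ht, hj⟩ := this
  exact ⟨(x, a, b), ht, rfl, hj.symm⟩

theorem dem_ya (hinv : Inv n T s) (h : j ∈ s.dem (.ya y)) :
    ∃ t, t ∈ T ∧ t.2.1 = y ∧ j = .gi t 2 := by
  have := hinv.1 _ h; simp [RD] at this
  obtain ⟨a, b, ht, hj⟩ := this
  exact ⟨(a, y, b), ht, rfl, hj.symm⟩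

theorem dem_ga0 (hinv : Inv n T s) (h : j ∈ s.dem (.ga t 0)) :
    t ∈ T ∧ (j = .gi t 1 ∨ j = .gi t 3) := by
  have := hinv.1 _ h; by_cases ht : t ∈ T <;> simp [RD, ht] at this <;> tauto

theorem dem_ga1 (hinv : Inv n T s) (h : j ∈ s.dem (.ga t 1)) :
    t ∈ T ∧ j = .yi t.2.1 := by
  have := hinv.1 _ h; by_cases ht : t ∈ T <;> simp [RD, ht] at this <;> tauto

theorem dem_ga2 (hinv : Inv n T s) (h : j ∈ s.dem (.ga t 2)) :
    t ∈ T ∧ j = .gi t 3 := by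
  have := hinv.1 _ h; by_cases ht : t ∈ T <;> simp [RD, ht] at this <;> tauto


variable {n : ℕ} {T : Finset (Fin n × Fin n × Fin n)} {s : TState (RAg n) (RIt n)}
  {i : RAg n} {j : RIt n} {t t' : Fin n × Fin n × Fin n} {x y z : Fin n}

theorem owns_xi (hinv : Inv n T s) (h : (RIt.xi x : RIt n) ∈ s.own i) :
    i = .xa3 x ∨ (i = .xa1 x ∧ (RIt.xi x : RIt n) ∉ s.dem i) := by
  rcases own_cases hinv h with h' | ⟨h', hd⟩ <;>
    rcases i with ⟨t', i'⟩ | y' | z' | x'' | x''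
  · simp only [RS] at h'; split at h' <;> simp at h'
  · simp [RS] at h'
  · simp [RS] at h'
  · simp [RS] at h'
  · simp [RS] at h'; subst h'; exact Or.inl rfl
  · simp only [RD] at h'; split at h' <;> [skip; simp at h'] <;> split at h' <;>
      [simp at h'; skip] <;> split at h' <;> simp at h'
  · simp [RD] at h'
  · simp [RD] at h'
  · simp [RD] at h'; subst h'; exact Or.inr ⟨rfl, hd⟩
  · simp [RD] at h'

theorem mem_RS_ga {i' : Fin 3} (h : j ∈ RS n T (.ga t' i')) :
    t' ∈ T ∧ j = .gi t' i'.castSucc := by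
  simp only [RS] at h; split at h <;> simp_all

theorem mem_RD_ga {i' : Fin 3} (h : j ∈ RD n T (.ga t' i')) :
    t' ∈ T ∧ ((i' = 0 ∧ (j = .gi t' 1 ∨ j = .gi t' 3)) ∨ (i' = 1 ∧ j = .yi t'.2.1) ∨
      (i' = 2 ∧ j = .gi t' 3)) := by
  fin_cases i' <;> by_cases ht : t' ∈ T <;> simp [RD, ht] at h ⊢ <;> tauto

theorem owns_zi (hinv : Inv n T s) (h : (RIt.zi z : RIt n) ∈ s.own i) :
    (∃ x', i = .xa1 x') ∨ (i = .za z ∧ (RIt.zi z : RIt n) ∉ s.dem i) := by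
  rcases own_cases hinv h with h' | ⟨h', hd⟩ <;>
    rcases i with ⟨t', i'⟩ | y' | z' | x'' | x''
  · rcases mem_RS_ga h' with ⟨-, h2⟩; simp at h2
  · simp [RS] at h'
  · simp [RS] at h'
  · exact Or.inl ⟨x'', rfl⟩
  · simp [RS] at h'
  · rcases mem_RD_ga h' with ⟨-, h2⟩; simp at h2
  · simp [RD] at h'
  · simp [RD] at h'; subst h'; exact Or.inr ⟨rfl, hd⟩
  · simp [RD] at h'
  · simp [RD] at h'

theorem owns_yi (hinv : Inv n T s) (h : (RIt.yi y : RIt n) ∈ s.own i) :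
    i = .ya y ∨ (∃ t, t ∈ T ∧ t.2.1 = y ∧ i = .ga t 1 ∧ (RIt.yi y : RIt n) ∉ s.dem i) := by
  rcases own_cases hinv h with h' | ⟨h', hd⟩ <;>
    rcases i with ⟨t', i'⟩ | y' | z' | x'' | x''
  · rcases mem_RS_ga h' with ⟨-, h2⟩; simp at h2
  · simp [RS] at h'; subst h'; exact Or.inl rfl
  · simp [RS] at h'
  · simp [RS] at h'
  · simp [RS] at h'
  · rcases mem_RD_ga h' with ⟨ht, h2⟩
    rcases h2 with ⟨hi, h2 | h2⟩ | ⟨hi, h2⟩ | ⟨hi, h2⟩ <;> simp at h2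
    subst hi
    exact Or.inr ⟨t', ht, h2.symm, rfl, hd⟩
  · simp [RD] at h'
  · simp [RD] at h'
  · simp [RD] at h'
  · simp [RD] at h'

theorem owns_gi0 (hinv : Inv n T s) (h : (RIt.gi t 0 : RIt n) ∈ s.own i) :
    (t ∈ T ∧ i = .ga t 0) ∨
      (t ∈ T ∧ i = .xa3 t.1 ∧ (RIt.gi t 0 : RIt n) ∉ s.dem i) := by
  rcases own_cases hinv h with h' | ⟨h', hd⟩ <;>
    rcases i with ⟨t', i'⟩ | y' | z' | x'' | x''
  · rcases mem_RS_ga h' with ⟨ht, h2⟩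
    fin_cases i' <;> simp [Fin.ext_iff] at h2
    subst h2; exact Or.inl ⟨ht, rfl⟩
  · simp [RS] at h'
  · simp [RS] at h'
  · simp [RS] at h'
  · simp [RS] at h'
  · rcases mem_RD_ga h' with ⟨ht, h2⟩
    rcases h2 with ⟨hi, h2 | h2⟩ | ⟨hi, h2⟩ | ⟨hi, h2⟩ <;> simp at h2
  · simp [RD] at h'
  · simp [RD] at h'
  · simp [RD] at h'
  · simp [RD] at h'
    exact Or.inr ⟨h'.1, by rw [h'.2], hd⟩

theorem owns_gi1 (hinv : Inv n T s) (h : (RIt.gi t 1 : RIt n) ∈ s.own i) :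
    (t ∈ T ∧ i = .ga t 1) ∨
      (t ∈ T ∧ i = .ga t 0 ∧ (RIt.gi t 1 : RIt n) ∉ s.dem i) := by
  rcases own_cases hinv h with h' | ⟨h', hd⟩ <;>
    rcases i with ⟨t', i'⟩ | y' | z' | x'' | x''
  · rcases mem_RS_ga h' with ⟨ht, h2⟩
    fin_cases i' <;> simp [Fin.ext_iff] at h2
    subst h2; exact Or.inl ⟨ht, rfl⟩
  · simp [RS] at h'
  · simp [RS] at h'
  · simp [RS] at h'
  · simp [RS] at h'
  · rcases mem_RD_ga h' with ⟨ht, h2⟩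
    rcases h2 with ⟨hi, h2 | h2⟩ | ⟨hi, h2⟩ | ⟨hi, h2⟩ <;> simp at h2
    subst hi; subst h2; exact Or.inr ⟨ht, rfl, hd⟩
  · simp [RD] at h'
  · simp [RD] at h'
  · simp [RD] at h'
  · simp [RD] at h'

theorem owns_gi2 (hinv : Inv n T s) (h : (RIt.gi t 2 : RIt n) ∈ s.own i) :
    (t ∈ T ∧ i = .ga t 2) ∨
      (t ∈ T ∧ i = .ya t.2.1 ∧ (RIt.gi t 2 : RIt n) ∉ s.dem i) := by
  rcases own_cases hinv h with h' | ⟨h', hd⟩ <;>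
    rcases i with ⟨t', i'⟩ | y' | z' | x'' | x''
  · rcases mem_RS_ga h' with ⟨ht, h2⟩
    fin_cases i' <;> simp [Fin.ext_iff] at h2
    subst h2; exact Or.inl ⟨ht, rfl⟩
  · simp [RS] at h'
  · simp [RS] at h'
  · simp [RS] at h'
  · simp [RS] at h'
  · rcases mem_RD_ga h' with ⟨ht, h2⟩
    rcases h2 with ⟨hi, h2 | h2⟩ | ⟨hi, h2⟩ | ⟨hi, h2⟩ <;> simp at h2
  · simp [RD] at h'
    exact Or.inr ⟨h'.1, by rw [h'.2], hd⟩
  · simp [RD] at h'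
  · simp [RD] at h'
  · simp [RD] at h'

theorem owns_gi3 (hinv : Inv n T s) (h : (RIt.gi t 3 : RIt n) ∈ s.own i) :
    (t ∈ T ∧ i = .za t.2.2) ∨
      (t ∈ T ∧ (i = .ga t 0 ∨ i = .ga t 2) ∧ (RIt.gi t 3 : RIt n) ∉ s.dem i) := by
  rcases own_cases hinv h with h' | ⟨h', hd⟩ <;>
    rcases i with ⟨t', i'⟩ | y' | z' | x'' | x''
  · rcases mem_RS_ga h' with ⟨ht, h2⟩
    fin_cases i' <;> rw [RIt.gi.injEq] at h2 <;> exact absurd h2.2 (by decide)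
  · simp [RS] at h'
  · simp [RS] at h'
    exact Or.inl ⟨h'.1, by rw [h'.2]⟩
  · simp [RS] at h'
  · simp [RS] at h'
  · rcases mem_RD_ga h' with ⟨ht, h2⟩
    rcases h2 with ⟨hi, h2 | h2⟩ | ⟨hi, h2⟩ | ⟨hi, h2⟩ <;> simp at h2
    · subst hi; subst h2; exact Or.inr ⟨ht, Or.inl rfl, hd⟩
    · subst hi; subst h2; exact Or.inr ⟨ht, Or.inr rfl, hd⟩
  · simp [RD] at h'
  · simp [RD] at h'
  · simp [RD] at h'
  · simp [RD] at h'

section Steps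

variable {c : List (RAg n × RIt n)} {p : RAg n × RIt n}

theorem cyc_nodup (hc : ValidCycle s c) : c.Nodup := (hc.2.2.1).of_map _

theorem cyc_dem (hc : ValidCycle s c) (hp : p ∈ c) : p.2 ∈ s.dem p.1 := hc.2.2.2.1 p hp

theorem cyc_own_nxt (hc : ValidCycle s c) (hp : p ∈ c) : p.2 ∈ s.own (nxt c p).1 :=
  hc.2.2.2.2 _ (nxt_gives hp)

theorem snd_inj (hc : ValidCycle s c) {q q' : RAg n × RIt n} (hq : q ∈ c) (hq' : q' ∈ c)
    (h : q.2 = q'.2) : q = q' :=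
  List.inj_on_of_nodup_map hc.2.2.1 hq hq' h

theorem fst_inj (hc : ValidCycle s c) {q q' : RAg n × RIt n} (hq : q ∈ c) (hq' : q' ∈ c)
    (h : q.1 = q'.1) : q = q' :=
  List.inj_on_of_nodup_map hc.2.1 hq hq' h

theorem pair_eq {q : RAg n × RIt n} {a : RAg n} {b : RIt n} (h1 : q.1 = a) (h2 : q.2 = b) :
    q = (a, b) := by
  rcases q with ⟨qa, qb⟩; simp_all

theorem step_xa1 (hinv : Inv n T s) (hc : ValidCycle s c) (hp : p ∈ c)
    (hsh : p = (.xa1 x, .xi x)) :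
    ∃ t, t ∈ T ∧ t.1 = x ∧ nxt c p = (.xa3 x, .gi t 0) := by
  subst hsh
  have hown := cyc_own_nxt hc hp
  have hd0 := cyc_dem hc hp
  rcases owns_xi hinv hown with h1 | ⟨h1, h2⟩
  · have hd := cyc_dem hc (nxt_mem hp)
    rw [h1] at hd
    obtain ⟨t, ht, hx, hj⟩ := dem_xa3 hinv hd
    exact ⟨t, ht, hx, pair_eq h1 hj⟩
  · rw [h1] at h2
    exact absurd hd0 h2

theorem step_xa3 (hinv : Inv n T s) (hc : ValidCycle s c) (hp : p ∈ c)
    {t : Fin n × Fin n × Fin n} (hsh : p = (.xa3 x, .gi t 0)) :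
    t ∈ T ∧ (nxt c p = (.ga t 0, .gi t 1) ∨ nxt c p = (.ga t 0, .gi t 3)) := by
  subst hsh
  have hown := cyc_own_nxt hc hp
  have hd0 := cyc_dem hc hp
  rcases owns_gi0 hinv hown with ⟨ht, h1⟩ | ⟨ht, h1, h2⟩
  · have hd := cyc_dem hc (nxt_mem hp)
    rw [h1] at hd
    rcases dem_ga0 hinv hd with ⟨-, hj | hj⟩
    · exact ⟨ht, Or.inl (pair_eq h1 hj)⟩
    · exact ⟨ht, Or.inr (pair_eq h1 hj)⟩
  · exfalso
    obtain ⟨t2, -, hx2, hj2⟩ := dem_xa3 hinv hd0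
    rw [RIt.gi.injEq] at hj2
    obtain ⟨he, -⟩ := hj2
    subst he
    rw [hx2] at h1
    rw [h1] at h2
    exact h2 hd0

theorem step_ga0_1 (hinv : Inv n T s) (hc : ValidCycle s c) (hp : p ∈ c)
    {t : Fin n × Fin n × Fin n} (hsh : p = (.ga t 0, .gi t 1)) :
    nxt c p = (.ga t 1, .yi t.2.1) := by
  subst hsh
  have hown := cyc_own_nxt hc hp
  have hd0 := cyc_dem hc hp
  rcases owns_gi1 hinv hown with ⟨ht, h1⟩ | ⟨ht, h1, h2⟩
  · have hd := cyc_dem hc (nxt_mem hp)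
    rw [h1] at hd
    exact pair_eq h1 (dem_ga1 hinv hd).2
  · rw [h1] at h2
    exact absurd hd0 h2

theorem step_ga0_3 (hinv : Inv n T s) (hc : ValidCycle s c) (hp : p ∈ c)
    {t : Fin n × Fin n × Fin n} (hsh : p = (.ga t 0, .gi t 3)) :
    nxt c p = (.za t.2.2, .zi t.2.2) := by
  subst hsh
  have hown := cyc_own_nxt hc hp
  have hd0 := cyc_dem hc hp
  rcases owns_gi3 hinv hown with ⟨ht, h1⟩ | ⟨ht, h1 | h1, h2⟩
  · have hd := cyc_dem hc (nxt_mem hp)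
    rw [h1] at hd
    exact pair_eq h1 (dem_za hinv hd)
  · rw [h1] at h2
    exact absurd hd0 h2
  · exfalso
    have hd := cyc_dem hc (nxt_mem hp)
    rw [h1] at hd
    rw [h1] at h2
    exact h2 ((dem_ga2 hinv hd).2 ▸ hd)

theorem step_ga1 (hinv : Inv n T s) (hc : ValidCycle s c) (hp : p ∈ c)
    {t : Fin n × Fin n × Fin n} (hsh : p = (.ga t 1, .yi y)) :
    ∃ t', t' ∈ T ∧ t'.2.1 = y ∧ nxt c p = (.ya y, .gi t' 2) := by
  subst hsh
  have hown := cyc_own_nxt hc hp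
  have hd0 := cyc_dem hc hp
  rcases owns_yi hinv hown with h1 | ⟨t2, ht2, hy2, h1, h2⟩
  · have hd := cyc_dem hc (nxt_mem hp)
    rw [h1] at hd
    obtain ⟨t', ht', hy', hj'⟩ := dem_ya hinv hd
    exact ⟨t', ht', hy', pair_eq h1 hj'⟩
  · exfalso
    have hd := cyc_dem hc (nxt_mem hp)
    rw [h1] at hd
    obtain ⟨-, hj⟩ := dem_ga1 hinv hd
    rw [hy2] at hj
    rw [h1] at h2
    exact h2 (hj ▸ hd)

theorem step_ya (hinv : Inv n T s) (hc : ValidCycle s c) (hp : p ∈ c)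
    {t' : Fin n × Fin n × Fin n} (hsh : p = (.ya y, .gi t' 2)) (hty : t'.2.1 = y) :
    nxt c p = (.ga t' 2, .gi t' 3) := by
  subst hsh
  have hown := cyc_own_nxt hc hp
  have hd0 := cyc_dem hc hp
  rcases owns_gi2 hinv hown with ⟨ht, h1⟩ | ⟨ht, h1, h2⟩
  · have hd := cyc_dem hc (nxt_mem hp)
    rw [h1] at hd
    exact pair_eq h1 (dem_ga2 hinv hd).2
  · rw [hty] at h1
    rw [h1] at h2
    exact absurd hd0 h2

theorem step_ga2 (hinv : Inv n T s) (hc : ValidCycle s c) (hp : p ∈ c)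
    {t : Fin n × Fin n × Fin n} (hsh : p = (.ga t 2, .gi t 3)) :
    nxt c p = (.za t.2.2, .zi t.2.2) ∨
      (nxt c p = (.ga t 0, .gi t 1) ∧ (RIt.gi t 3 : RIt n) ∈ s.own (.ga t 0) ∧
        ((RAg.ga t 0 : RAg n), (RIt.gi t 3 : RIt n)) ∈ gives c) := by
  subst hsh
  have hown := cyc_own_nxt hc hp
  have hd0 := cyc_dem hc hp
  have hgv := nxt_gives hp
  rcases owns_gi3 hinv hown with ⟨ht, h1⟩ | ⟨ht, h1 | h1, h2⟩
  · have hd := cyc_dem hc (nxt_mem hp)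
    rw [h1] at hd
    exact Or.inl (pair_eq h1 (dem_za hinv hd))
  · have hd := cyc_dem hc (nxt_mem hp)
    rw [h1] at hd
    rcases dem_ga0 hinv hd with ⟨-, hj | hj⟩
    · refine Or.inr ⟨pair_eq h1 hj, h1 ▸ hown, ?_⟩
      rw [h1] at hgv
      exact hgv
    · exfalso
      rw [h1] at h2
      exact h2 (hj ▸ hd)
  · exfalso
    rw [h1] at h2
    exact h2 hd0

theorem step_za (hinv : Inv n T s) (hc : ValidCycle s c) (hp : p ∈ c)
    (hsh : p = (.za z, .zi z)) : ∃ x, nxt c p = (.xa1 x, .xi x) := by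
  subst hsh
  have hown := cyc_own_nxt hc hp
  have hd0 := cyc_dem hc hp
  rcases owns_zi hinv hown with ⟨x', h1⟩ | ⟨h1, h2⟩
  · have hd := cyc_dem hc (nxt_mem hp)
    rw [h1] at hd
    exact ⟨x', pair_eq h1 (dem_xa1 hinv hd)⟩
  · rw [h1] at h2
    exact absurd hd0 h2

end Steps

section Classify

variable {c : List (RAg n × RIt n)} {p : RAg n × RIt n}

def smallC (x : Fin n) (t : Fin n × Fin n × Fin n) : List (RAg n × RIt n) :=
  [(.xa1 x, .xi x), (.xa3 x, .gi t 0), (.ga t 0, .gi t 3), (.za t.2.2, .zi t.2.2)]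

def largeC (x : Fin n) (t t' : Fin n × Fin n × Fin n) : List (RAg n × RIt n) :=
  [(.xa1 x, .xi x), (.xa3 x, .gi t 0), (.ga t 0, .gi t 1), (.ga t 1, .yi t.2.1),
    (.ya t.2.1, .gi t' 2), (.ga t' 2, .gi t' 3), (.za t'.2.2, .zi t'.2.2)]

def yC (t : Fin n × Fin n × Fin n) : List (RAg n × RIt n) :=
  [(.ga t 2, .gi t 3), (.ga t 0, .gi t 1), (.ga t 1, .yi t.2.1), (.ya t.2.1, .gi t 2)]

theorem isE0_iff : isE0 p = true ↔ ∃ x, p = (.xa1 x, .xi x) := by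
  rcases p with ⟨a, b⟩
  rcases a with ⟨t', i'⟩ | y' | z' | x' | x' <;> rcases b with ⟨t2, j⟩ | y2 | z2 | x2 <;>
    simp [isE0]
  exact eq_comm

theorem countP_ne_zero_of_E0 {x : Fin n} (h : ((RAg.xa1 x : RAg n), (RIt.xi x : RIt n)) ∈ c) :
    c.countP isE0 ≠ 0 := by
  have : 0 < c.countP isE0 := List.countP_pos_iff.2 ⟨_, h, by simp [isE0]⟩
  omega

theorem unique_E0 (h1 : c.countP isE0 = 1) {q q' : RAg n × RIt n} (hq : q ∈ c) (hq' : q' ∈ c)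
    (e : isE0 q) (e' : isE0 q') : q = q' := by
  rw [List.countP_eq_length_filter] at h1
  obtain ⟨a, ha⟩ := List.length_eq_one_iff.1 h1
  have m1 : q ∈ c.filter isE0 := List.mem_filter.2 ⟨hq, e⟩
  have m2 : q' ∈ c.filter isE0 := List.mem_filter.2 ⟨hq', e'⟩
  rw [ha] at m1 m2
  simp at m1 m2
  rw [m1, m2]

theorem nxt_injOn (hc : ValidCycle s c) {q q' : RAg n × RIt n} (hq : q ∈ c) (hq' : q' ∈ c)
    (h : nxt c q = nxt c q') : q = q' := by
  have hL := cyc_nodup hc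
  have h1 := ix_nxt hL hq
  have h2 := ix_nxt hL hq'
  rw [h] at h1
  have e : (ix c q + 1) % c.length = (ix c q' + 1) % c.length := by rw [← h1, ← h2]
  have l1 := ix_lt hq
  have l2 := ix_lt hq'
  have : ix c q = ix c q' := by
    rcases Nat.lt_or_ge (ix c q + 1) c.length with h3 | h3 <;>
      rcases Nat.lt_or_ge (ix c q' + 1) c.length with h4 | h4
    · rw [Nat.mod_eq_of_lt h3, Nat.mod_eq_of_lt h4] at e; omega
    · have e4 : ix c q' + 1 = c.length := by omega
      rw [Nat.mod_eq_of_lt h3, e4, Nat.mod_self] at e; omega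
    · have e3 : ix c q + 1 = c.length := by omega
      rw [Nat.mod_eq_of_lt h4, e3, Nat.mod_self] at e; omega
    · omega
  rw [← getElem_ix hq, ← getElem_ix hq']
  simp only [this]

theorem iterate_four {f : (RAg n × RIt n) → (RAg n × RIt n)} {a0 a1 a2 a3 : RAg n × RIt n}
    (e1 : f a0 = a1) (e2 : f a1 = a2) (e3 : f a2 = a3) (e4 : f a3 = a0) : f^[4] a0 = a0 := by
  simp [Function.iterate_succ_apply', e1, e2, e3, e4]

theorem iterate_seven {f : (RAg n × RIt n) → (RAg n × RIt n)} {a0 a1 a2 a3 a4 a5 a6 : RAg n × RIt n}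
    (e1 : f a0 = a1) (e2 : f a1 = a2) (e3 : f a2 = a3) (e4 : f a3 = a4) (e5 : f a4 = a5)
    (e6 : f a5 = a6) (e7 : f a6 = a0) : f^[7] a0 = a0 := by
  simp [Function.iterate_succ_apply', e1, e2, e3, e4, e5, e6, e7]

theorem classifyX (hinv : Inv n T s) (hc : ValidCycle s c) (h1 : c.countP isE0 = 1) :
    (∃ x t, t ∈ T ∧ t.1 = x ∧ c.Perm (smallC x t)) ∨
      (∃ x t t', t ∈ T ∧ t' ∈ T ∧ t.1 = x ∧ t'.2.1 = t.2.1 ∧ c.Perm (largeC x t t')) := by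
  have hpos : 0 < c.countP isE0 := by omega
  obtain ⟨p0, m0, he0⟩ := List.countP_pos_iff.1 hpos
  obtain ⟨x, hp0⟩ := isE0_iff.1 he0
  obtain ⟨t, ht, htx, e1⟩ := step_xa1 hinv hc m0 hp0
  have m1 : nxt c p0 ∈ c := nxt_mem m0
  obtain ⟨-, h2⟩ := step_xa3 hinv hc m1 e1
  have m2 : nxt c (nxt c p0) ∈ c := nxt_mem m1
  rcases h2 with e2 | e2
  · -- large cycle
    have e3 := step_ga0_1 hinv hc m2 e2
    have m3 := nxt_mem m2
    obtain ⟨t', ht', hty, e4⟩ := step_ga1 hinv hc m3 e3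
    have m4 := nxt_mem m3
    have e5 := step_ya hinv hc m4 e4 hty
    have m5 := nxt_mem m4
    rcases step_ga2 hinv hc m5 e5 with e6 | ⟨e6, -, -⟩
    · have m6 := nxt_mem m5
      obtain ⟨x', e7⟩ := step_za hinv hc m6 e6
      have m7 := nxt_mem m6
      have hE : isE0 (nxt c (nxt c (nxt c (nxt c (nxt c (nxt c (nxt c p0))))))) := by
        rw [e7]; simp [isE0]
      have e7' : nxt c (nxt c (nxt c (nxt c (nxt c (nxt c (nxt c p0)))))) = p0 :=
        unique_E0 h1 m7 m0 hE he0
      right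
      refine ⟨x, t, t', ht, ht', htx, hty, ?_⟩
      have hiter : (nxt c)^[7] p0 = p0 := iterate_seven rfl rfl rfl rfl rfl rfl e7'
      have hnd : (largeC x t t').Nodup := by simp [largeC]
      have hsub : largeC x t t' ⊆ c := by
        intro q hq
        simp only [largeC, List.mem_cons, List.not_mem_nil, or_false] at hq
        rcases hq with rfl | rfl | rfl | rfl | rfl | rfl | rfl
        · exact hp0 ▸ m0
        · exact e1 ▸ m1
        · exact e2 ▸ m2
        · exact e3 ▸ m3
        · exact e4 ▸ m4
        · exact e5 ▸ m5
        · exact e6 ▸ m6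
      have hmem : ((RAg.xa1 x : RAg n), (RIt.xi x : RIt n)) ∈ largeC x t t' := by
        simp [largeC]
      have := perm_of_chain (cyc_nodup hc) hmem hnd hsub
        (by rw [show (largeC x t t').length = 7 by simp [largeC], ← hp0]; exact hiter)
      exact this
    · -- reversed branch: contradiction
      exfalso
      have m6 := nxt_mem m5
      have e7 := step_ga0_1 hinv hc m6 e6
      have m7 := nxt_mem m6
      -- (nxt^7 p0) has snd yi t'.2.1 = yi t.2.1 = snd of nxt^3 p0
      have hsnd : (nxt c (nxt c (nxt c (nxt c (nxt c (nxt c (nxt c p0))))))).2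
          = (nxt c (nxt c (nxt c p0))).2 := by
        rw [e7, e3, hty]
      have heq := snd_inj hc m7 m3 hsnd
      rw [e7, e3] at heq
      simp only [Prod.mk.injEq, RAg.ga.injEq] at heq
      obtain ⟨⟨htt, -⟩, -⟩ := heq
      subst htt
      -- now nxt (nxt^5) = nxt^2  hence nxt^5 = nxt^1, i.e. (ga t 2, gi t 3) = (xa3 x, gi t 0)
      have : nxt c (nxt c (nxt c (nxt c (nxt c (nxt c p0))))) = nxt c (nxt c p0) := by
        rw [e6, ← e2]
      have h5 := nxt_injOn hc m5 m1 this
      rw [e5, e1] at h5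
      simp at h5
  · -- small cycle
    have e3 := step_ga0_3 hinv hc m2 e2
    have m3 := nxt_mem m2
    obtain ⟨x', e4⟩ := step_za hinv hc m3 e3
    have m4 := nxt_mem m3
    have hE : isE0 (nxt c (nxt c (nxt c (nxt c p0)))) := by rw [e4]; simp [isE0]
    have e4' : nxt c (nxt c (nxt c (nxt c p0))) = p0 := unique_E0 h1 m4 m0 hE he0
    left
    refine ⟨x, t, ht, htx, ?_⟩
    have hiter : (nxt c)^[4] p0 = p0 := iterate_four rfl rfl rfl e4'
    have hnd : (smallC x t).Nodup := by simp [smallC]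
    have hsub : smallC x t ⊆ c := by
      intro q hq
      simp only [smallC, List.mem_cons, List.not_mem_nil, or_false] at hq
      rcases hq with rfl | rfl | rfl | rfl
      · exact hp0 ▸ m0
      · exact e1 ▸ m1
      · exact e2 ▸ m2
      · exact e3 ▸ m3
    have hmem : ((RAg.xa1 x : RAg n), (RIt.xi x : RIt n)) ∈ smallC x t := by simp [smallC]
    exact perm_of_chain (cyc_nodup hc) hmem hnd hsub
      (by rw [show (smallC x t).length = 4 by simp [smallC], ← hp0]; exact hiter)

end Classify

section ClassifyY

variable {c : List (RAg n × RIt n)} {p : RAg n × RIt n}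

/-- From a `(ya y, gi t' 2)` element we find a `(ga t' 2, gi t' 3)` element. -/
theorem find_from_ya (hinv : Inv n T s) (hc : ValidCycle s c) (hp : p ∈ c)
    {t' : Fin n × Fin n × Fin n} {y : Fin n} (hsh : p = (.ya y, .gi t' 2)) (hty : t'.2.1 = y) :
    ((RAg.ga t' 2 : RAg n), (RIt.gi t' 3 : RIt n)) ∈ c := by
  have := step_ya hinv hc hp hsh hty
  exact this ▸ nxt_mem hp

/-- In a cycle with no `E0` edge, there is a `(ga t 2, gi t 3)` element. -/
theorem find_ga2 (hinv : Inv n T s) (hc : ValidCycle s c) (h0 : c.countP isE0 = 0) :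
    ∃ t, ((RAg.ga t 2 : RAg n), (RIt.gi t 3 : RIt n)) ∈ c := by
  obtain ⟨p0, m0⟩ := List.exists_mem_of_ne_nil c hc.1
  have hd0 := cyc_dem hc m0
  rcases hsh : p0 with ⟨a, b⟩
  subst hsh
  rcases a with ⟨t, i'⟩ | y | z | x | x
  · fin_cases i'
    · rcases dem_ga0 hinv hd0 with ⟨ht, hb | hb⟩
      · have e1 := step_ga0_1 hinv hc m0 (pair_eq rfl hb)
        have m1 := nxt_mem m0
        obtain ⟨t', ht', hty, e2⟩ := step_ga1 hinv hc m1 e1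
        have m2 := nxt_mem m1
        exact ⟨t', find_from_ya hinv hc m2 e2 hty⟩
      · exfalso
        have e1 := step_ga0_3 hinv hc m0 (pair_eq rfl hb)
        have m1 := nxt_mem m0
        obtain ⟨x', e2⟩ := step_za hinv hc m1 e1
        exact countP_ne_zero_of_E0 (e2 ▸ nxt_mem m1) h0
    · obtain ⟨ht, hb⟩ := dem_ga1 hinv hd0
      obtain ⟨t', ht', hty, e1⟩ := step_ga1 hinv hc m0 (pair_eq rfl hb)
      have m1 := nxt_mem m0
      exact ⟨t', find_from_ya hinv hc m1 e1 hty⟩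
    · obtain ⟨ht, hb⟩ := dem_ga2 hinv hd0
      exact ⟨t, hb ▸ m0⟩
  · obtain ⟨t', ht', hty, hb⟩ := dem_ya hinv hd0
    exact ⟨t', find_from_ya hinv hc m0 (pair_eq rfl hb) hty⟩
  · exfalso
    have hb := dem_za hinv hd0
    obtain ⟨x', e1⟩ := step_za hinv hc m0 (pair_eq rfl hb)
    exact countP_ne_zero_of_E0 (e1 ▸ nxt_mem m0) h0
  · exact absurd h0 (countP_ne_zero_of_E0 ((pair_eq rfl (dem_xa1 hinv hd0)) ▸ m0))
  · obtain ⟨t, ht, htx, hb⟩ := dem_xa3 hinv hd0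
    obtain ⟨-, h2⟩ := step_xa3 hinv hc m0 (pair_eq rfl hb)
    rcases h2 with e1 | e1
    · have m1 := nxt_mem m0
      have e2 := step_ga0_1 hinv hc m1 e1
      have m2 := nxt_mem m1
      obtain ⟨t', ht', hty, e3⟩ := step_ga1 hinv hc m2 e2
      have m3 := nxt_mem m2
      exact ⟨t', find_from_ya hinv hc m3 e3 hty⟩
    · exfalso
      have m1 := nxt_mem m0
      have e2 := step_ga0_3 hinv hc m1 e1
      have m2 := nxt_mem m1
      obtain ⟨x', e3⟩ := step_za hinv hc m2 e2
      exact countP_ne_zero_of_E0 (e3 ▸ nxt_mem m2) h0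

theorem classifyY (hinv : Inv n T s) (hc : ValidCycle s c) (h0 : c.countP isE0 = 0) :
    ∃ t, t ∈ T ∧ c.Perm (yC t) ∧ (RIt.gi t 3 : RIt n) ∈ s.own (.ga t 0) ∧
      ((RAg.ga t 0 : RAg n), (RIt.gi t 3 : RIt n)) ∈ gives c := by
  obtain ⟨t, m0⟩ := find_ga2 hinv hc h0
  have ht : t ∈ T := (dem_ga2 hinv (cyc_dem hc m0)).1
  rcases step_ga2 hinv hc m0 rfl with e1 | ⟨e1, hown, hgv⟩
  · exfalso
    have m1 := nxt_mem m0
    obtain ⟨x', e2⟩ := step_za hinv hc m1 e1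
    exact countP_ne_zero_of_E0 (e2 ▸ nxt_mem m1) h0
  · have m1 := nxt_mem m0
    have e2 := step_ga0_1 hinv hc m1 e1
    have m2 := nxt_mem m1
    obtain ⟨t', ht', hty, e3⟩ := step_ga1 hinv hc m2 e2
    have m3 := nxt_mem m2
    have e4 := step_ya hinv hc m3 e3 hty
    have m4 := nxt_mem m3
    by_cases htt : t' = t
    · subst htt
      refine ⟨t', ht, ?_, hown, hgv⟩
      have hiter : (nxt c)^[4] ((RAg.ga t' 2 : RAg n), (RIt.gi t' 3 : RIt n))
          = ((RAg.ga t' 2 : RAg n), (RIt.gi t' 3 : RIt n)) :=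
        iterate_four rfl rfl rfl e4
      have hnd : (yC t').Nodup := by simp [yC]
      have hsub : yC t' ⊆ c := by
        intro q hq
        simp only [yC, List.mem_cons, List.not_mem_nil, or_false] at hq
        rcases hq with rfl | rfl | rfl | rfl
        · exact m0
        · exact e1 ▸ m1
        · exact e2 ▸ m2
        · exact e3 ▸ m3
      have hmem : ((RAg.ga t' 2 : RAg n), (RIt.gi t' 3 : RIt n)) ∈ yC t' := by simp [yC]
      exact perm_of_chain (cyc_nodup hc) hmem hnd hsub
        (by rw [show (yC t').length = 4 by simp [yC]]; exact hiter)
    · exfalso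
      rcases step_ga2 hinv hc m4 e4 with e5 | ⟨e5, -, -⟩
      · have m5 := nxt_mem m4
        obtain ⟨x', e6⟩ := step_za hinv hc m5 e5
        exact countP_ne_zero_of_E0 (e6 ▸ nxt_mem m5) h0
      · have m5 := nxt_mem m4
        have e6 := step_ga0_1 hinv hc m5 e5
        have m6 := nxt_mem m5
        have hsnd : (nxt c (nxt c ((RAg.ga t 2 : RAg n), (RIt.gi t 3 : RIt n)))).2
            = (nxt c (nxt c (nxt c (nxt c (nxt c (nxt c
                ((RAg.ga t 2 : RAg n), (RIt.gi t 3 : RIt n)))))))).2 := by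
          rw [e6, e2, hty]
        have heq := snd_inj hc m2 m6 hsnd
        rw [e6, e2] at heq
        simp only [Prod.mk.injEq, RAg.ga.injEq] at heq
        exact htt heq.1.1.symm

end ClassifyY

section Counting

variable {c : List (RAg n × RIt n)} {r : List (List (RAg n × RIt n))}

theorem inv_init : Inv n T ⟨RS n T, RD n T⟩ :=
  ⟨fun _ => Finset.Subset.refl _, fun _ => Finset.subset_union_left⟩

theorem dem_step_mem {i : RAg n} {j : RIt n} :
    j ∈ (stepCycle s c).dem i ↔ j ∈ s.dem i ∧ (i, j) ∉ c := by
  simp [stepCycle]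

theorem own_step_mem {i : RAg n} {j : RIt n} :
    j ∈ (stepCycle s c).own i ↔ (j ∈ s.own i ∧ (i, j) ∉ gives c) ∨ (i, j) ∈ c := by
  simp only [stepCycle, Finset.mem_union, Finset.mem_filter, List.mem_toFinset, List.mem_map,
    List.mem_filter]
  constructor
  · rintro (⟨h1, h2⟩ | ⟨p, ⟨hp, hp1⟩, hp2⟩)
    · exact Or.inl ⟨h1, h2⟩
    · right
      have : p = (i, j) := by
        rcases p with ⟨a, b⟩
        simp at hp1 hp2
        simp [hp1, hp2]
      exact this ▸ hp
  · rintro (⟨h1, h2⟩ | h)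
    · exact Or.inl ⟨h1, h2⟩
    · exact Or.inr ⟨(i, j), ⟨h, by simp⟩, rfl⟩

theorem inv_step (hinv : Inv n T s) (hc : ValidCycle s c) : Inv n T (stepCycle s c) := by
  constructor
  · intro i j hj
    exact hinv.1 i (dem_step_mem.1 hj).1
  · intro i j hj
    rcases own_step_mem.1 hj with ⟨h1, -⟩ | h1
    · rcases Finset.mem_union.1 (hinv.2 i h1) with h2 | h2
      · exact Finset.mem_union_left _ h2
      · rcases Finset.mem_sdiff.1 h2 with ⟨h3, h4⟩
        refine Finset.mem_union_right _ (Finset.mem_sdiff.2 ⟨h3, fun h5 => h4 (dem_step_mem.1 h5).1⟩)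
    · have hd : j ∈ s.dem i := cyc_dem hc h1
      refine Finset.mem_union_right _ (Finset.mem_sdiff.2 ⟨hinv.1 i hd, fun h5 => ?_⟩)
      exact (dem_step_mem.1 h5).2 h1

def Tok (n : ℕ) (s : TState (RAg n) (RIt n)) : ℕ :=
  (Finset.univ.filter fun t : Fin n × Fin n × Fin n =>
    (RIt.gi t 3 : RIt n) ∈ s.own (RAg.ga t 0)).card

def TokX (n : ℕ) (s : TState (RAg n) (RIt n)) : ℕ :=
  (Finset.univ.filter fun x : Fin n => (RIt.xi x : RIt n) ∈ s.dem (RAg.xa1 x)).card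

theorem tok_init : Tok n (⟨RS n T, RD n T⟩ : TState (RAg n) (RIt n)) = 0 := by
  rw [Tok, Finset.card_eq_zero, Finset.filter_eq_empty_iff]
  intro t _
  show (RIt.gi t 3 : RIt n) ∉ RS n T (RAg.ga t 0)
  intro h
  rcases mem_RS_ga h with ⟨-, h2⟩
  rw [RIt.gi.injEq] at h2
  exact absurd h2.2 (by decide)

theorem tokX_init : TokX n (⟨RS n T, RD n T⟩ : TState (RAg n) (RIt n)) = n := by
  rw [TokX]
  have : (Finset.univ.filter fun x : Fin n =>
      (RIt.xi x : RIt n) ∈ RD n T (RAg.xa1 x)) = Finset.univ := by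
    apply Finset.filter_true_of_mem
    intro x _
    simp [RD]
  rw [this, Finset.card_univ, Fintype.card_fin]

theorem tokX_mono (hc : ValidCycle s c) : TokX n (stepCycle s c) ≤ TokX n s := by
  apply Finset.card_le_card
  intro x hx
  simp only [Finset.mem_filter] at hx ⊢
  exact ⟨hx.1, (dem_step_mem.1 hx.2).1⟩

theorem tokX_decr (hc : ValidCycle s c) {x : Fin n}
    (hx : ((RAg.xa1 x : RAg n), (RIt.xi x : RIt n)) ∈ c) :
    TokX n (stepCycle s c) + 1 ≤ TokX n s := by
  have hmem : x ∈ Finset.univ.filter fun x : Fin n =>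
      (RIt.xi x : RIt n) ∈ s.dem (RAg.xa1 x) := by
    simp only [Finset.mem_filter, Finset.mem_univ, true_and]
    exact cyc_dem hc hx
  have hsub : (Finset.univ.filter fun x' : Fin n =>
      (RIt.xi x' : RIt n) ∈ (stepCycle s c).dem (RAg.xa1 x')) ⊆
      (Finset.univ.filter fun x' : Fin n =>
        (RIt.xi x' : RIt n) ∈ s.dem (RAg.xa1 x')).erase x := by
    intro x' hx'
    simp only [Finset.mem_filter, Finset.mem_univ, true_and] at hx'
    obtain ⟨h1, h2⟩ := dem_step_mem.1 hx'
    refine Finset.mem_erase.2 ⟨fun he => h2 (he ▸ hx), ?_⟩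
    simp only [Finset.mem_filter, Finset.mem_univ, true_and]
    exact h1
  calc TokX n (stepCycle s c) + 1 ≤ ((Finset.univ.filter fun x' : Fin n =>
      (RIt.xi x' : RIt n) ∈ s.dem (RAg.xa1 x')).erase x).card + 1 :=
        Nat.add_le_add_right (Finset.card_le_card hsub) 1
    _ ≤ TokX n s := by
        rw [Finset.card_erase_of_mem hmem]
        have : 0 < TokX n s := Finset.card_pos.2 ⟨x, hmem⟩
        unfold TokX at *
        omega

theorem tok_le_succ {t : Fin n × Fin n × Fin n}
    (hng : ∀ t' : Fin n × Fin n × Fin n,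
      ((RAg.ga t' 0 : RAg n), (RIt.gi t' 3 : RIt n)) ∈ c → t' = t) :
    Tok n (stepCycle s c) ≤ Tok n s + 1 := by
  have hsub : (Finset.univ.filter fun t' : Fin n × Fin n × Fin n =>
      (RIt.gi t' 3 : RIt n) ∈ (stepCycle s c).own (RAg.ga t' 0)) ⊆
      (Finset.univ.filter fun t' : Fin n × Fin n × Fin n =>
        (RIt.gi t' 3 : RIt n) ∈ s.own (RAg.ga t' 0)) ∪ {t} := by
    intro t' ht'
    simp only [Finset.mem_filter, Finset.mem_univ, true_and] at ht'
    rcases own_step_mem.1 ht' with ⟨h1, -⟩ | h1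
    · apply Finset.mem_union_left
      simp only [Finset.mem_filter, Finset.mem_univ, true_and]
      exact h1
    · apply Finset.mem_union_right
      simp [hng t' h1]
  calc Tok n (stepCycle s c) ≤ _ := Finset.card_le_card hsub
    _ ≤ Tok n s + 1 := le_trans (Finset.card_union_le _ _) (by simp [Tok])

theorem tok_mono
    (hng : ∀ t' : Fin n × Fin n × Fin n,
      ((RAg.ga t' 0 : RAg n), (RIt.gi t' 3 : RIt n)) ∉ c) :
    Tok n (stepCycle s c) ≤ Tok n s := by
  apply Finset.card_le_card
  intro t' ht'
  simp only [Finset.mem_filter, Finset.mem_univ, true_and] at ht' ⊢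
  rcases own_step_mem.1 ht' with ⟨h1, -⟩ | h1
  · exact h1
  · exact absurd h1 (hng t')

theorem tok_decr {t : Fin n × Fin n × Fin n}
    (hown : (RIt.gi t 3 : RIt n) ∈ s.own (RAg.ga t 0))
    (hgv : ((RAg.ga t 0 : RAg n), (RIt.gi t 3 : RIt n)) ∈ gives c)
    (hng : ∀ t' : Fin n × Fin n × Fin n,
      ((RAg.ga t' 0 : RAg n), (RIt.gi t' 3 : RIt n)) ∉ c) :
    Tok n (stepCycle s c) + 1 ≤ Tok n s := by
  have hmem : t ∈ Finset.univ.filter fun t' : Fin n × Fin n × Fin n =>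
      (RIt.gi t' 3 : RIt n) ∈ s.own (RAg.ga t' 0) := by
    simp only [Finset.mem_filter, Finset.mem_univ, true_and]; exact hown
  have hsub : (Finset.univ.filter fun t' : Fin n × Fin n × Fin n =>
      (RIt.gi t' 3 : RIt n) ∈ (stepCycle s c).own (RAg.ga t' 0)) ⊆
      (Finset.univ.filter fun t' : Fin n × Fin n × Fin n =>
        (RIt.gi t' 3 : RIt n) ∈ s.own (RAg.ga t' 0)).erase t := by
    intro t' ht'
    simp only [Finset.mem_filter, Finset.mem_univ, true_and] at ht'
    rcases own_step_mem.1 ht' with ⟨h1, h2⟩ | h1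
    · refine Finset.mem_erase.2 ⟨fun he => h2 (he ▸ hgv), ?_⟩
      simp only [Finset.mem_filter, Finset.mem_univ, true_and]
      exact h1
    · exact absurd h1 (hng t')
  calc Tok n (stepCycle s c) + 1 ≤ _ + 1 := Nat.add_le_add_right (Finset.card_le_card hsub) 1
    _ ≤ Tok n s := by
        rw [Finset.card_erase_of_mem hmem]
        have : 0 < Tok n s := Finset.card_pos.2 ⟨t, hmem⟩
        unfold Tok at *
        omega

end Counting

section Main

variable {c : List (RAg n × RIt n)} {r : List (List (RAg n × RIt n))}

def numSmall (r : List (List (RAg n × RIt n))) : ℕ :=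
  r.countP fun c => (c.countP isE0 != 0) && (c.countP isE6 != 0)

theorem main_aux (r : List (List (RAg n × RIt n))) :
    ∀ s : TState (RAg n) (RIt n), Inv n T s → ValidExec s r →
    (∀ c ∈ r, c.countP isE0 ≠ 0 → c.countP isE0 = 1) →
    exchanges r = 4 * numSmall r + 7 * numLarge r + 4 * numY r ∧
      numSmall r + numLarge r ≤ TokX n s ∧ numY r ≤ Tok n s + numSmall r := by
  induction r with
  | nil => intro s _ _ _; simp [exchanges, numSmall, numLarge, numY]
  | cons c r ih =>
    intro s hinv hexec hs
    obtain ⟨hc, hexec'⟩ := hexec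
    have hinv' := inv_step hinv hc
    obtain ⟨E, H1, H2⟩ := ih _ hinv' hexec' (fun c' h' _ => hs c' (List.mem_cons_of_mem _ h')
      (by assumption))
    by_cases h0 : c.countP isE0 = 0
    · obtain ⟨t, ht, hperm, hown, hgv⟩ := classifyY hinv hc h0
      have hlen : c.length = 4 := by rw [hperm.length_eq]; simp [yC]
      have hng : ∀ t' : Fin n × Fin n × Fin n,
          ((RAg.ga t' 0 : RAg n), (RIt.gi t' 3 : RIt n)) ∉ c := by
        intro t' h
        have := hperm.mem_iff.1 h
        simp [yC] at this
      have eY : numY (c :: r) = numY r + 1 := by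
        simp [numY, List.countP_cons, h0]
      have eL : numLarge (c :: r) = numLarge r := by
        simp [numLarge, List.countP_cons, h0]
      have eS : numSmall (c :: r) = numSmall r := by
        simp [numSmall, List.countP_cons, h0]
      have eE : exchanges (c :: r) = 4 + exchanges r := by
        simp [exchanges, hlen]
      have htok : Tok n (stepCycle s c) + 1 ≤ Tok n s := tok_decr hown hgv hng
      have htokX : TokX n (stepCycle s c) ≤ TokX n s := tokX_mono hc
      refine ⟨by omega, by omega, by omega⟩
    · have h1 : c.countP isE0 = 1 := hs c List.mem_cons_self h0
      rcases classifyX hinv hc h1 with ⟨x, t, ht, htx, hperm⟩ |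
        ⟨x, t, t', ht, ht', htx, hty, hperm⟩
      · -- small X-cycle
        have hlen : c.length = 4 := by rw [hperm.length_eq]; simp [smallC]
        have hE6 : c.countP isE6 = 1 := by
          rw [hperm.countP_eq]; simp [smallC, List.countP_cons, isE6]
        have hng : ∀ t' : Fin n × Fin n × Fin n,
            ((RAg.ga t' 0 : RAg n), (RIt.gi t' 3 : RIt n)) ∈ c → t' = t := by
          intro t' h
          have := hperm.mem_iff.1 h
          simpa [smallC] using this
        have hxmem : ((RAg.xa1 x : RAg n), (RIt.xi x : RIt n)) ∈ c :=
          hperm.mem_iff.2 (by simp [smallC])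
        have eY : numY (c :: r) = numY r := by
          simp [numY, List.countP_cons, h1]
        have eL : numLarge (c :: r) = numLarge r := by
          simp [numLarge, List.countP_cons, h1, hE6]
        have eS : numSmall (c :: r) = numSmall r + 1 := by
          simp [numSmall, List.countP_cons, h1, hE6]
        have eE : exchanges (c :: r) = 4 + exchanges r := by
          simp [exchanges, hlen]
        have htok : Tok n (stepCycle s c) ≤ Tok n s + 1 := tok_le_succ hng
        have htokX : TokX n (stepCycle s c) + 1 ≤ TokX n s := tokX_decr hc hxmem
        refine ⟨by omega, by omega, by omega⟩
      · -- large X-cycle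
        have hlen : c.length = 7 := by rw [hperm.length_eq]; simp [largeC]
        have hE6 : c.countP isE6 = 0 := by
          rw [hperm.countP_eq]; simp [largeC, List.countP_cons, isE6]
        have hng : ∀ t'' : Fin n × Fin n × Fin n,
            ((RAg.ga t'' 0 : RAg n), (RIt.gi t'' 3 : RIt n)) ∉ c := by
          intro t'' h
          have := hperm.mem_iff.1 h
          simp [largeC] at this
        have hxmem : ((RAg.xa1 x : RAg n), (RIt.xi x : RIt n)) ∈ c :=
          hperm.mem_iff.2 (by simp [largeC])
        have eY : numY (c :: r) = numY r := by
          simp [numY, List.countP_cons, h1]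
        have eL : numLarge (c :: r) = numLarge r + 1 := by
          simp [numLarge, List.countP_cons, h1, hE6]
        have eS : numSmall (c :: r) = numSmall r := by
          simp [numSmall, List.countP_cons, h1, hE6]
        have eE : exchanges (c :: r) = 7 + exchanges r := by
          simp [exchanges, hlen]
        have htok : Tok n (stepCycle s c) ≤ Tok n s := tok_mono hng
        have htokX : TokX n (stepCycle s c) + 1 ≤ TokX n s := tokX_decr hc hxmem
        refine ⟨by omega, by omega, by omega⟩

end Main

end S13
/-- In the reduction trading graph, any execution in which every
`X`-cycle uses exactly one `E₀` edge and which contains `k` large `X`-cycles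
performs at most `8n − k` exchanges, with equality iff it executes exactly `n − k`
`Y`-cycles. -/
theorem stmt13 (n : ℕ) (T : Finset (Fin n × Fin n × Fin n))
    (r : List (List (RAg n × RIt n))) (hr : ValidExec ⟨RS n T, RD n T⟩ r)
    (hsimple : ∀ c ∈ r, c.countP isE0 ≠ 0 → c.countP isE0 = 1) :
    exchanges r ≤ 8 * n - numLarge r ∧
    (exchanges r = 8 * n - numLarge r ↔ numY r = n - numLarge r) := by
  obtain ⟨E, H1, H2⟩ := S13.main_aux (T := T) r ⟨RS n T, RD n T⟩ S13.inv_init hr hsimple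
  rw [S13.tok_init] at H2
  rw [S13.tokX_init] at H1
  omega
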